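/- (Key pointwise estimates in the blow-up) There exists ε₀ ∈ (0,1/2] such that for every ε ∈ (0,ε₀], every n ≥ 0 and every I ∈ 𝒟^n the following holds. Write a = a_{I₀} = (1,0), D_I = α_{n+1} (sin γ_{n+1}) ⟨a, a_{I₊}⟩ and F_I = β_{n+1} (cos γ_{n+1}) ⟨a, b_{I₊}⟩. Then ⟨a, W_{I₊} b_I⟩ = D_I + F_I, the angle between a and a_{I₊} is at most ε/(1-ε), and: D_I ≥ ε^{n+1}/8, |F_I| ≤ β_{n+1} ≤ ε^{2n+4}, and D_I ≥ 2|F_I|; consequently ⟨a, W_{I₊} b_I⟩ ≥ ε^{n+1}/16. -/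

import Mathlib

open MeasureTheory Set
open scoped ENNReal Matrix Pointwise Classical

noncomputable section

/-- The unit interval `I₀ = [0,1)`. -/
def I0 : Set ℝ := Set.Ico (0 : ℝ) 1

/-- The dyadic interval `[k/2^n, (k+1)/2^n)`. -/
def dyad (n k : ℕ) : Set ℝ := Set.Ico ((k : ℝ) / 2 ^ n) (((k : ℝ) + 1) / 2 ^ n)

/-- Real `d × d` matrices. -/
abbrev Mat (d : ℕ) := Matrix (Fin d) (Fin d) ℝ

/-- The Euclidean norm `|v|_{ℝ^d}`. -/
def enorm2 {d : ℕ} (v : Fin d → ℝ) : ℝ := Real.sqrt (∑ i, v i ^ 2)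

/-- The Euclidean inner product `⟨v, w⟩_{ℝ^d}`. -/
def dotp {d : ℕ} (v w : Fin d → ℝ) : ℝ := ∑ i, v i * w i

open scoped Classical in
/-- The positive semidefinite square root of a positive semidefinite matrix
(junk value `0` if the matrix is not positive semidefinite). -/
def matSqrt {d : ℕ} (A : Mat d) : Mat d := if h : A.PosSemidef then
    h.1.eigenvectorUnitary.1 * Matrix.diagonal ((↑) ∘ (√·) ∘ h.1.eigenvalues) *
      (star h.1.eigenvectorUnitary : Mat d) else 0

/-- Order in the sense of quadratic forms: `A ⩽ B` iff `B - A` is positive semidefinite. -/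
def matLE {d : ℕ} (A B : Mat d) : Prop := (B - A).PosSemidef

/-- The average `⟨g⟩_I = |I|⁻¹ ∫_I g` of a (scalar- or vector-valued) function. -/
def avgOn {E : Type*} [NormedAddCommGroup E] [NormedSpace ℝ E] (I : Set ℝ) (g : ℝ → E) : E :=
  (volume I).toReal⁻¹ • ∫ x in I, g x

/-- The entrywise average `⟨W⟩_I` of a matrix-valued function. -/
def avgMat {d : ℕ} (I : Set ℝ) (W : ℝ → Mat d) : Mat d :=
  Matrix.of fun i j => avgOn I fun x => W x i j

/-- A matrix weight on `I₀`: an integrable function with symmetric values,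
positive definite a.e. on `I₀`. -/
structure IsMatrixWeight (d : ℕ) (W : ℝ → Mat d) : Prop where
  intOn : ∀ i j, IntegrableOn (fun x => W x i j) I0
  symm : ∀ x, (W x).IsSymm
  posdef : ∀ᵐ x ∂(volume.restrict I0), (W x).PosDef

/-- Membership in `L²_W(ℝ^d)`. -/
def MemL2W {d : ℕ} (W : ℝ → Mat d) (f : ℝ → Fin d → ℝ) : Prop :=
  Measurable f ∧ IntegrableOn (fun x => dotp (W x *ᵥ f x) (f x)) I0

/-- The squared norm `‖f‖²_{L²_W} = ∫_{I₀} ⟨W(x) f(x), f(x)⟩ dx`. -/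
def l2normSq {d : ℕ} (W : ℝ → Mat d) (f : ℝ → Fin d → ℝ) : ℝ :=
  ∫ x in I0, dotp (W x *ᵥ f x) (f x)

/-- The average `⟨φ W f⟩_I = |I|⁻¹ ∫_I φ(y) W(y) f(y) dy`. -/
def avgPhiWf {d : ℕ} (I : Set ℝ) (φ : ℝ → ℝ) (W : ℝ → Mat d) (f : ℝ → Fin d → ℝ) :
    Fin d → ℝ :=
  avgOn I fun y => φ y • (W y *ᵥ f y)

/-- Admissible functions `φ : I → [-1,1]`, measurable. -/
def Adm (I : Set ℝ) (φ : ℝ → ℝ) : Prop :=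
  Measurable φ ∧ ∀ y ∈ I, φ y ∈ Set.Icc (-1 : ℝ) 1

/-- The eigenvalue `α_n = 1/(1+ε^{2n+2})`. -/
def alphaC (ε : ℝ) (n : ℕ) : ℝ := 1 / (1 + ε ^ (2 * n + 2))

/-- The eigenvalue `β_n = ε^{2n+2}/(1+ε^{2n+2})`. -/
def betaC (ε : ℝ) (n : ℕ) : ℝ := ε ^ (2 * n + 2) / (1 + ε ^ (2 * n + 2))

/-- The rotation parameter `δ_n = (ε^{2n}(1-ε²)/(1-ε^{4n+2}))^{1/2}`. -/
def deltaC (ε : ℝ) (n : ℕ) : ℝ :=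
  Real.sqrt (ε ^ (2 * n) * (1 - ε ^ 2) / (1 - ε ^ (4 * n + 2)))

/-- The rotation angle `γ_n = arctan δ_n`. -/
def gammaC (ε : ℝ) (n : ℕ) : ℝ := Real.arctan (deltaC ε n)

/-- The orthonormal pairs `(a_I, b_I)` indexed by dyadic intervals `I = dyad n k`:
`a_{I₀} = (1,0)`, `b_{I₀} = (0,1)`, and for `I ∈ 𝒟^n`,
`a_{I±} = (cos γ_{n+1}) a_I ± (sin γ_{n+1}) b_I`,
`b_{I±} = (cos γ_{n+1}) b_I ∓ (sin γ_{n+1}) a_I`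
(the right child of `dyad n k` is `dyad (n+1) (2k+1)`, the left one `dyad (n+1) (2k)`). -/
def abC (ε : ℝ) : ℕ → ℕ → (Fin 2 → ℝ) × (Fin 2 → ℝ)
  | 0, _ => (![1, 0], ![0, 1])
  | n + 1, k =>
    let p := abC ε n (k / 2)
    let γ := gammaC ε (n + 1)
    if k % 2 = 1 then
      (Real.cos γ • p.1 + Real.sin γ • p.2, Real.cos γ • p.2 - Real.sin γ • p.1)
    else
      (Real.cos γ • p.1 - Real.sin γ • p.2, Real.cos γ • p.2 + Real.sin γ • p.1)

/-- The eigenvector `a_I` for `I = dyad n k`. -/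
def aC (ε : ℝ) (n k : ℕ) : Fin 2 → ℝ := (abC ε n k).1

/-- The eigenvector `b_I` for `I = dyad n k`. -/
def bC (ε : ℝ) (n k : ℕ) : Fin 2 → ℝ := (abC ε n k).2

/-- The average `W_I = α_n a_I a_Iᵀ + β_n b_I b_Iᵀ` for `I = dyad n k`. -/
def WC (ε : ℝ) (n k : ℕ) : Mat 2 :=
  alphaC ε n • Matrix.vecMulVec (aC ε n k) (aC ε n k) +
    betaC ε n • Matrix.vecMulVec (bC ε n k) (bC ε n k)

/-- The Carleson matrices `A_I = |I| ε^{-2(n+1)} b_I b_Iᵀ` for `I = dyad n k`. -/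
def AC (ε : ℝ) (n k : ℕ) : Mat 2 :=
  (((2 : ℝ) ^ n)⁻¹ * ((ε ^ (n + 1))⁻¹) ^ 2) • Matrix.vecMulVec (bC ε n k) (bC ε n k)

section BlowupAux

open Real

lemma myArctan_le_self {x : ℝ} (hx : 0 ≤ x) : Real.arctan x ≤ x := by
  have h1 : Real.arctan x < π / 2 := Real.arctan_lt_pi_div_two x
  have h0 : 0 ≤ Real.arctan x := by
    rw [← Real.arctan_zero]
    exact Real.arctan_strictMono.monotone hx
  calc Real.arctan x ≤ Real.tan (Real.arctan x) := Real.le_tan h0 h1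
    _ = x := Real.tan_arctan x

lemma gammaC_nonneg (ε : ℝ) (m : ℕ) : 0 ≤ gammaC ε m := by
  rw [gammaC, ← Real.arctan_zero]
  exact Real.arctan_strictMono.monotone (Real.sqrt_nonneg _)

lemma deltaC_nonneg (ε : ℝ) (m : ℕ) : 0 ≤ deltaC ε m := Real.sqrt_nonneg _

lemma deltaC_le {ε : ℝ} (h0 : 0 < ε) (h1 : ε < 1) (j : ℕ) :
    deltaC ε (j + 1) ≤ ε ^ (j + 1) := by
  have hden : 0 < 1 - ε ^ (4 * (j + 1) + 2) := by
    have : ε ^ (4 * (j + 1) + 2) < 1 := pow_lt_one₀ h0.le h1 (by omega)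
    linarith
  rw [deltaC, Real.sqrt_le_left (by positivity), div_le_iff₀ hden]
  have h2 : ε ^ (4 * (j + 1) + 2) ≤ ε ^ 2 := pow_le_pow_of_le_one h0.le h1.le (by omega)
  have h3 : (0:ℝ) ≤ ε ^ (2 * (j + 1)) := by positivity
  have h4 : (ε ^ (j + 1)) ^ 2 = ε ^ (2 * (j + 1)) := by
    rw [← pow_mul, Nat.mul_comm]
  rw [h4]
  nlinarith [h3, h2]

lemma deltaC_ge {ε : ℝ} (h0 : 0 < ε) (hε : ε ≤ 1 / 4) (j : ℕ) :
    3 / 4 * ε ^ (j + 1) ≤ deltaC ε (j + 1) := by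
  have h1 : ε < 1 := by linarith
  have hden : 0 < 1 - ε ^ (4 * (j + 1) + 2) := by
    have : ε ^ (4 * (j + 1) + 2) < 1 := pow_lt_one₀ h0.le h1 (by omega)
    linarith
  have hden1 : 1 - ε ^ (4 * (j + 1) + 2) ≤ 1 := by
    have := pow_nonneg h0.le (4 * (j + 1) + 2); linarith
  rw [deltaC, Real.le_sqrt (mul_nonneg (by norm_num) (pow_nonneg h0.le _)) (div_nonneg (mul_nonneg (pow_nonneg h0.le _) (by nlinarith)) hden.le), le_div_iff₀ hden]
  have hsq : ε ^ 2 ≤ 1 / 16 := by nlinarith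
  have h3 : (0:ℝ) < ε ^ (2 * (j + 1)) := by positivity
  have h4 : (3 / 4 * ε ^ (j + 1)) ^ 2 = 9 / 16 * ε ^ (2 * (j + 1)) := by
    rw [mul_pow, ← pow_mul]; ring_nf
  have h5 : (0:ℝ) ≤ ε ^ (4 * (j + 1) + 2) := by positivity
  rw [h4]
  nlinarith [h3, hsq, h5, hden]

lemma gammaC_le {ε : ℝ} (h0 : 0 < ε) (h1 : ε < 1) (j : ℕ) :
    gammaC ε (j + 1) ≤ ε ^ (j + 1) :=
  (myArctan_le_self (deltaC_nonneg ε (j + 1))).trans (deltaC_le h0 h1 j)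

lemma sum_gammaC_le {ε : ℝ} (h0 : 0 < ε) (h1 : ε < 1) (N : ℕ) :
    ∑ m ∈ Finset.range N, gammaC ε (m + 1) ≤ ε / (1 - ε) := by
  have step : ∑ m ∈ Finset.range N, gammaC ε (m + 1) ≤ ∑ m ∈ Finset.range N, ε ^ (m + 1) :=
    Finset.sum_le_sum fun m _ => gammaC_le h0 h1 m
  refine step.trans ?_
  have hg : ∑ m ∈ Finset.range N, ε ^ m ≤ 1 / (1 - ε) := by
    rw [geom_sum_eq h1.ne]
    have he : (ε ^ N - 1) / (ε - 1) = (1 - ε ^ N) / (1 - ε) := by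
      rw [← neg_div_neg_eq]; ring_nf
    rw [he]
    have hN : (0:ℝ) ≤ ε ^ N := by positivity
    have h1ε : (0:ℝ) < 1 - ε := by linarith
    exact (div_le_div_iff_of_pos_right h1ε).mpr (by linarith)
  have he2 : ∑ m ∈ Finset.range N, ε ^ (m + 1) = (∑ m ∈ Finset.range N, ε ^ m) * ε := by
    rw [Finset.sum_mul]
    exact Finset.sum_congr rfl fun m _ => (pow_succ ε m).symm
  rw [he2]
  have h1ε : (0:ℝ) < 1 - ε := by linarith
  calc (∑ m ∈ Finset.range N, ε ^ m) * ε ≤ (1 / (1 - ε)) * ε :=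
        mul_le_mul_of_nonneg_right hg h0.le
    _ = ε / (1 - ε) := by ring

lemma rot_a (θ γ : ℝ) :
    Real.cos γ • (![Real.cos θ, Real.sin θ] : Fin 2 → ℝ)
        + Real.sin γ • ![-Real.sin θ, Real.cos θ]
      = ![Real.cos (θ + γ), Real.sin (θ + γ)] := by
  funext i; fin_cases i <;>
    simp [Real.cos_add, Real.sin_add] <;> ring

lemma rot_b (θ γ : ℝ) :
    Real.cos γ • (![-Real.sin θ, Real.cos θ] : Fin 2 → ℝ)
        - Real.sin γ • ![Real.cos θ, Real.sin θ]
      = ![-Real.sin (θ + γ), Real.cos (θ + γ)] := by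
  funext i; fin_cases i <;>
    simp [Real.cos_add, Real.sin_add] <;> ring

lemma rot_a' (θ γ : ℝ) :
    Real.cos γ • (![Real.cos θ, Real.sin θ] : Fin 2 → ℝ)
        - Real.sin γ • ![-Real.sin θ, Real.cos θ]
      = ![Real.cos (θ - γ), Real.sin (θ - γ)] := by
  funext i; fin_cases i <;>
    simp [Real.cos_sub, Real.sin_sub] <;> ring

lemma rot_b' (θ γ : ℝ) :
    Real.cos γ • (![-Real.sin θ, Real.cos θ] : Fin 2 → ℝ)
        + Real.sin γ • ![Real.cos θ, Real.sin θ]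
      = ![-Real.sin (θ - γ), Real.cos (θ - γ)] := by
  funext i; fin_cases i <;>
    simp [Real.cos_sub, Real.sin_sub] <;> ring

lemma abC_succ (ε : ℝ) (n k : ℕ) :
    abC ε (n + 1) k =
      (if k % 2 = 1 then
        (Real.cos (gammaC ε (n + 1)) • (abC ε n (k / 2)).1
            + Real.sin (gammaC ε (n + 1)) • (abC ε n (k / 2)).2,
         Real.cos (gammaC ε (n + 1)) • (abC ε n (k / 2)).2
            - Real.sin (gammaC ε (n + 1)) • (abC ε n (k / 2)).1)
      else
        (Real.cos (gammaC ε (n + 1)) • (abC ε n (k / 2)).1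
            - Real.sin (gammaC ε (n + 1)) • (abC ε n (k / 2)).2,
         Real.cos (gammaC ε (n + 1)) • (abC ε n (k / 2)).2
            + Real.sin (gammaC ε (n + 1)) • (abC ε n (k / 2)).1)) := rfl

lemma abC_rep (ε : ℝ) : ∀ n k : ℕ,
    ∃ θ : ℝ, |θ| ≤ ∑ m ∈ Finset.range n, gammaC ε (m + 1) ∧
      (abC ε n k).1 = ![Real.cos θ, Real.sin θ] ∧
      (abC ε n k).2 = ![-Real.sin θ, Real.cos θ] := by
  intro n
  induction n with
  | zero =>
      intro k
      exact ⟨0, by simp, by simp [abC], by simp [abC]⟩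
  | succ n ih =>
      intro k
      obtain ⟨θ, hθ, ha, hb⟩ := ih (k / 2)
      have hγ : 0 ≤ gammaC ε (n + 1) := gammaC_nonneg ε (n + 1)
      rcases Nat.mod_two_eq_zero_or_one k with hm | hm
      · refine ⟨θ - gammaC ε (n + 1), ?_, ?_, ?_⟩
        · rw [Finset.sum_range_succ]
          calc |θ - gammaC ε (n + 1)| ≤ |θ| + |gammaC ε (n + 1)| := abs_sub _ _
            _ = |θ| + gammaC ε (n + 1) := by rw [abs_of_nonneg hγ]
            _ ≤ _ := by linarith
        · rw [abC_succ, if_neg (by omega), ha, hb]; exact rot_a' θ _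
        · rw [abC_succ, if_neg (by omega), ha, hb]; exact rot_b' θ _
      · refine ⟨θ + gammaC ε (n + 1), ?_, ?_, ?_⟩
        · rw [Finset.sum_range_succ]
          calc |θ + gammaC ε (n + 1)| ≤ |θ| + |gammaC ε (n + 1)| := abs_add_le _ _
            _ = |θ| + gammaC ε (n + 1) := by rw [abs_of_nonneg hγ]
            _ ≤ _ := by linarith
        · rw [abC_succ, if_pos hm, ha, hb]; exact rot_a θ _
        · rw [abC_succ, if_pos hm, ha, hb]; exact rot_b θ _

end BlowupAux


set_option maxHeartbeats 1000000 in
/-- **Key pointwise estimates in the blow-up.** There is `ε₀ ∈ (0,1/2]` such that for all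
`ε ∈ (0,ε₀]`, `n ≥ 0` and `I = dyad n k ∈ 𝒟^n`, writing `a = a_{I₀} = (1,0)`,
`D_I = α_{n+1} (sin γ_{n+1}) ⟨a, a_{I₊}⟩` and `F_I = β_{n+1} (cos γ_{n+1}) ⟨a, b_{I₊}⟩`:
`⟨a, W_{I₊} b_I⟩ = D_I + F_I`, the angle between `a` and `a_{I₊}` is at most `ε/(1-ε)`,
`D_I ≥ ε^{n+1}/8`, `|F_I| ≤ β_{n+1} ≤ ε^{2n+4}`, `D_I ≥ 2|F_I|`, and consequently
`⟨a, W_{I₊} b_I⟩ ≥ ε^{n+1}/16`. -/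
theorem blowup_pointwise_estimates :
    ∃ ε₀ : ℝ, 0 < ε₀ ∧ ε₀ ≤ 1 / 2 ∧ ∀ ε : ℝ, 0 < ε → ε ≤ ε₀ →
      ∀ n k : ℕ, k < 2 ^ n →
        dotp (aC ε 0 0) (WC ε (n + 1) (2 * k + 1) *ᵥ bC ε n k) =
            alphaC ε (n + 1) * Real.sin (gammaC ε (n + 1)) *
                dotp (aC ε 0 0) (aC ε (n + 1) (2 * k + 1)) +
              betaC ε (n + 1) * Real.cos (gammaC ε (n + 1)) *
                dotp (aC ε 0 0) (bC ε (n + 1) (2 * k + 1)) ∧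
        Real.arccos (dotp (aC ε 0 0) (aC ε (n + 1) (2 * k + 1))) ≤ ε / (1 - ε) ∧
        ε ^ (n + 1) / 8 ≤
          alphaC ε (n + 1) * Real.sin (gammaC ε (n + 1)) *
            dotp (aC ε 0 0) (aC ε (n + 1) (2 * k + 1)) ∧
        |betaC ε (n + 1) * Real.cos (gammaC ε (n + 1)) *
            dotp (aC ε 0 0) (bC ε (n + 1) (2 * k + 1))| ≤ betaC ε (n + 1) ∧
        betaC ε (n + 1) ≤ ε ^ (2 * n + 4) ∧
        2 * |betaC ε (n + 1) * Real.cos (gammaC ε (n + 1)) *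
            dotp (aC ε 0 0) (bC ε (n + 1) (2 * k + 1))| ≤
          alphaC ε (n + 1) * Real.sin (gammaC ε (n + 1)) *
            dotp (aC ε 0 0) (aC ε (n + 1) (2 * k + 1)) ∧
        ε ^ (n + 1) / 16 ≤
          dotp (aC ε 0 0) (WC ε (n + 1) (2 * k + 1) *ᵥ bC ε n k) := by
  refine ⟨1/4, by norm_num, by norm_num, ?_⟩
  intro ε hε0 hε4 n k _hk
  have hε1 : ε < 1 := by linarith
  set γ : ℝ := gammaC ε (n + 1) with hγdef
  obtain ⟨θ, hθ, ha, hb⟩ := abC_rep ε n k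
  -- child vectors
  have hm : (2 * k + 1) % 2 = 1 := by omega
  have hd : (2 * k + 1) / 2 = k := by omega
  have ha' : aC ε (n + 1) (2 * k + 1) = ![Real.cos (θ + γ), Real.sin (θ + γ)] := by
    rw [aC, abC_succ, if_pos hm, hd, ha, hb]; exact rot_a θ γ
  have hb' : bC ε (n + 1) (2 * k + 1) = ![-Real.sin (θ + γ), Real.cos (θ + γ)] := by
    rw [bC, abC_succ, if_pos hm, hd, ha, hb]; exact rot_b θ γ
  have ha0 : aC ε 0 0 = ![1, 0] := rfl
  -- dot products
  have da : dotp (aC ε 0 0) (aC ε (n + 1) (2 * k + 1)) = Real.cos (θ + γ) := by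
    rw [ha0, ha']; simp [dotp, Fin.sum_univ_two]
  have db : dotp (aC ε 0 0) (bC ε (n + 1) (2 * k + 1)) = -Real.sin (θ + γ) := by
    rw [ha0, hb']; simp [dotp, Fin.sum_univ_two]
  -- abbreviations
  set α : ℝ := alphaC ε (n + 1) with hαdef
  set β : ℝ := betaC ε (n + 1) with hβdef
  set x : ℝ := ε ^ (n + 1) with hxdef
  have hx0 : 0 < x := pow_pos hε0 _
  have hx4 : x ≤ 1 / 4 := by
    calc x ≤ ε ^ 1 := pow_le_pow_of_le_one hε0.le hε1.le (by omega)
      _ = ε := pow_one ε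
      _ ≤ 1 / 4 := hε4
  -- the key algebraic identity
  have key : dotp (aC ε 0 0) (WC ε (n + 1) (2 * k + 1) *ᵥ bC ε n k)
      = α * Real.sin γ * Real.cos (θ + γ) + β * Real.cos γ * (-Real.sin (θ + γ)) := by
    have hbp : bC ε n k = ![-Real.sin θ, Real.cos θ] := hb
    rw [WC, ← hαdef, ← hβdef, ha0, ha', hb', hbp]
    simp only [dotp, Matrix.mulVec, Matrix.vecMulVec_apply, Matrix.add_apply,
      Matrix.smul_apply, dotProduct, Fin.sum_univ_two, smul_eq_mul,
      Matrix.cons_val_zero, Matrix.cons_val_one, Matrix.head_cons,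
      Real.cos_add, Real.sin_add]
    linear_combination (α * Real.cos θ * Real.cos γ * Real.sin γ - α * Real.sin θ * Real.sin γ ^ 2
        - Real.cos θ * Real.cos γ * Real.sin γ * β - Real.cos γ ^ 2 * Real.sin θ * β) *
      Real.sin_sq_add_cos_sq θ
  -- angle bound
  have hsum : |θ + γ| ≤ ε / (1 - ε) := by
    have h1 : |θ + γ| ≤ |θ| + γ := by
      calc |θ + γ| ≤ |θ| + |γ| := abs_add_le _ _
        _ = |θ| + γ := by rw [abs_of_nonneg (gammaC_nonneg ε (n + 1))]
    have h2 : |θ| + γ ≤ ∑ m ∈ Finset.range (n + 1), gammaC ε (m + 1) := by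
      rw [Finset.sum_range_succ]; exact add_le_add hθ le_rfl
    exact h1.trans (h2.trans (sum_gammaC_le hε0 hε1 (n + 1)))
  have hr3 : ε / (1 - ε) ≤ 1 / 3 := by
    rw [div_le_div_iff₀ (by linarith) (by norm_num)]
    linarith
  have habs3 : |θ + γ| ≤ 1 / 3 := hsum.trans hr3
  have harccos : Real.arccos (dotp (aC ε 0 0) (aC ε (n + 1) (2 * k + 1))) ≤ ε / (1 - ε) := by
    rw [da, ← Real.cos_abs, Real.arccos_cos (abs_nonneg _)
      (by have := Real.pi_gt_three; linarith)]
    exact hsum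
  -- cosine lower bound
  have hcosθ : (17 : ℝ) / 18 ≤ Real.cos (θ + γ) := by
    have h2 : (θ + γ) ^ 2 ≤ (1 / 3) ^ 2 := by
      rw [← sq_abs]; exact pow_le_pow_left₀ (abs_nonneg _) habs3 2
    have := Real.one_sub_sq_div_two_le_cos (x := θ + γ)
    nlinarith
  -- delta and sin/cos gamma bounds
  set δ : ℝ := deltaC ε (n + 1) with hδdef
  have hδ0 : 0 ≤ δ := deltaC_nonneg ε (n + 1)
  have hδle : δ ≤ x := deltaC_le hε0 hε1 n
  have hδge : 3 / 4 * x ≤ δ := deltaC_ge hε0 hε4 n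
  have hsin_eq : Real.sin γ = δ / Real.sqrt (1 + δ ^ 2) := by
    rw [hγdef, gammaC, Real.sin_arctan, hδdef]
  have hcos_eq : Real.cos γ = 1 / Real.sqrt (1 + δ ^ 2) := by
    rw [hγdef, gammaC, Real.cos_arctan, hδdef]
  have hs1 : (1 : ℝ) ≤ Real.sqrt (1 + δ ^ 2) :=
    Real.le_sqrt_of_sq_le (by nlinarith [sq_nonneg δ])
  have hs2 : Real.sqrt (1 + δ ^ 2) ≤ 17 / 16 := by
    rw [Real.sqrt_le_left (by norm_num)]
    nlinarith [hδle, hδ0, hx4]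
  have hsinγ : 2 / 3 * x ≤ Real.sin γ := by
    rw [hsin_eq]
    have h1 : δ / (17 / 16) ≤ δ / Real.sqrt (1 + δ ^ 2) :=
      div_le_div_of_nonneg_left hδ0 (by linarith) hs2
    have h2 : (2:ℝ) / 3 * x ≤ δ / (17 / 16) := by
      rw [le_div_iff₀ (by norm_num : (0:ℝ) < 17/16)]
      linarith
    exact le_trans h2 h1
  have hsinγ0 : 0 ≤ Real.sin γ := le_trans (by linarith) hsinγ
  have hcosγ01 : 0 ≤ Real.cos γ ∧ Real.cos γ ≤ 1 := by
    constructor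
    · rw [hcos_eq]; positivity
    · rw [hcos_eq, div_le_one (by linarith)]; exact hs1
  -- alpha and beta bounds
  have ht0 : (0:ℝ) ≤ ε ^ (2 * (n + 1) + 2) := pow_nonneg hε0.le _
  have ht16 : ε ^ (2 * (n + 1) + 2) ≤ 1 / 16 := by
    calc ε ^ (2 * (n + 1) + 2) ≤ ε ^ 2 := pow_le_pow_of_le_one hε0.le hε1.le (by omega)
      _ ≤ (1/4) ^ 2 := pow_le_pow_left₀ hε0.le hε4 2
      _ = 1 / 16 := by norm_num
  have hα : 16 / 17 ≤ α ∧ α ≤ 1 := by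
    rw [hαdef, alphaC]
    constructor
    · rw [div_le_div_iff₀ (by norm_num) (by linarith)]; linarith
    · rw [div_le_one (by linarith)]; linarith
  have hβ0 : 0 ≤ β := by
    rw [hβdef, betaC]
    exact div_nonneg (pow_nonneg hε0.le _) (by nlinarith [pow_nonneg hε0.le (2 * (n + 1) + 2)])
  have hβle : β ≤ ε ^ (2 * n + 4) := by
    have hexp : (2:ℕ) * (n + 1) + 2 = 2 * n + 4 := by ring
    rw [hβdef, betaC, hexp]
    exact div_le_self (pow_nonneg hε0.le _) (by nlinarith [pow_nonneg hε0.le (2 * n + 4)])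
  -- D lower bound
  have hD : x / 8 ≤ α * Real.sin γ * Real.cos (θ + γ) := by
    have p1 : (2 / 3 * x) * (17 / 18) ≤ Real.sin γ * Real.cos (θ + γ) :=
      mul_le_mul hsinγ hcosθ (by norm_num) hsinγ0
    have p2 : (16 / 17) * ((2 / 3 * x) * (17 / 18)) ≤ α * (Real.sin γ * Real.cos (θ + γ)) :=
      mul_le_mul hα.1 p1 (by nlinarith) (le_trans (by norm_num) hα.1)
    linarith [p2, hx0]
  -- F bound
  have hF : |β * Real.cos γ * (-Real.sin (θ + γ))| ≤ β := by
    rw [abs_mul, abs_mul, abs_neg, abs_of_nonneg hβ0, abs_of_nonneg hcosγ01.1]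
    have hsle : |Real.sin (θ + γ)| ≤ 1 :=
      abs_le.2 ⟨Real.neg_one_le_sin _, Real.sin_le_one _⟩
    calc β * Real.cos γ * |Real.sin (θ + γ)| ≤ β * Real.cos γ * 1 :=
        mul_le_mul_of_nonneg_left hsle (mul_nonneg hβ0 hcosγ01.1)
      _ = β * Real.cos γ := mul_one _
      _ ≤ β * 1 := mul_le_mul_of_nonneg_left hcosγ01.2 hβ0
      _ = β := mul_one _
  -- 2|F| ≤ D
  have hβx : 2 * β ≤ x / 8 := by
    have h1 : ε ^ (2 * n + 4) = x * ε ^ (n + 3) := by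
      rw [hxdef, ← pow_add]; ring_nf
    have h2 : ε ^ (n + 3) ≤ 1 / 64 := by
      calc ε ^ (n + 3) ≤ ε ^ 3 := pow_le_pow_of_le_one hε0.le hε1.le (by omega)
        _ ≤ (1/4) ^ 3 := pow_le_pow_left₀ hε0.le hε4 3
        _ = 1 / 64 := by norm_num
    have h3 : (0:ℝ) ≤ ε ^ (n + 3) := pow_nonneg hε0.le _
    have h4 := mul_le_mul_of_nonneg_left h2 hx0.le
    linarith [hβle, h4]
  have h2F : 2 * |β * Real.cos γ * (-Real.sin (θ + γ))| ≤ α * Real.sin γ * Real.cos (θ + γ) := by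
    linarith [hF, hβx, hD]
  -- final bound
  have hfinal : x / 16 ≤ dotp (aC ε 0 0) (WC ε (n + 1) (2 * k + 1) *ᵥ bC ε n k) := by
    rw [key]
    have := neg_abs_le (β * Real.cos γ * (-Real.sin (θ + γ)))
    linarith [hD, h2F, this]
  refine ⟨?_, harccos, ?_, ?_, hβle, ?_, hfinal⟩
  · rw [key, da, db]
  · rw [da]; exact hD
  · rw [db]; exact hF
  · rw [da, db]; exact h2F
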